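/- arXiv:1905.01413 — 2 statements merged into one kernel-verified Lean document; each statement's English description precedes it below -/
import Mathlib

section
/- Property I (Dirichlet racing representation): Let φ ∈ ℝ^C and π = (π₁,…,π_C) ~ Dir(1_C), the symmetric Dirichlet distribution with all concentration parameters equal to one. Then z := argmin_{i∈{1,…,C}} π_i e^{-φ_i} satisfies P(z = c) = σ(φ)_c, i.e., z ~ Cat(σ(φ)). -/
open MeasureTheory ProbabilityTheory

/-- Tie-breaking argmin over `Fin C` (the argmin is a.s. unique in all statements below). -/
noncomputable def argminF {C : ℕ} [NeZero C] (v : Fin C → ℝ) : Fin C :=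
  (Finset.exists_min_image Finset.univ v Finset.univ_nonempty).choose

/-- The softmax function. -/
noncomputable def softmax {C : ℕ} (φ : Fin C → ℝ) (c : Fin C) : ℝ :=
  Real.exp (φ c) / ∑ i, Real.exp (φ i)

/-- The symmetric Dirichlet distribution `Dir(1_C)`, realized as normalized iid Exp(1). -/
noncomputable def dirichletOne (C : ℕ) : Measure (Fin C → ℝ) :=
  Measure.map (fun ε i => ε i / ∑ j, ε j) (Measure.pi fun _ => expMeasure 1)

/-- Pseudo action `z^{c⇌j}`: argmin after swapping coordinates `c` and `j` of `π`. -/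
noncomputable def zswap {C : ℕ} [NeZero C] (φ π : Fin C → ℝ) (c j : Fin C) : Fin C :=
  argminF (fun i => π (Equiv.swap c j i) * Real.exp (-φ i))

section Aux

lemma argminF_le {C : ℕ} [NeZero C] (v : Fin C → ℝ) (i : Fin C) : v (argminF v) ≤ v i := by
  obtain ⟨-, h⟩ := (Finset.exists_min_image Finset.univ v Finset.univ_nonempty).choose_spec
  exact h i (Finset.mem_univ i)

lemma argminF_eq_iff {C : ℕ} [NeZero C] (v : Fin C → ℝ) (c : Fin C)
    (hne : ∀ i, i ≠ c → v i ≠ v c) :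
    argminF v = c ↔ ∀ i, i ≠ c → v c < v i := by
  constructor
  · intro h i hi
    have h2 := argminF_le v i
    rw [h] at h2
    exact lt_of_le_of_ne h2 fun he => hne i hi he.symm
  · intro h
    by_contra hb
    exact absurd (argminF_le v c) (not_le.mpr (h _ hb))

lemma ineq_iff (a b u v : ℝ) :
    a * Real.exp (-u) < b * Real.exp (-v) ↔ a * Real.exp (v - u) < b := by
  rw [← mul_lt_mul_iff_of_pos_right (Real.exp_pos v), mul_assoc, mul_assoc, ← Real.exp_add, ← Real.exp_add,
    neg_add_cancel, Real.exp_zero, mul_one, show -u + v = v - u by ring]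

lemma eq_iff' (a b u v : ℝ) :
    a * Real.exp (-u) = b * Real.exp (-v) ↔ a = b * Real.exp (u - v) := by
  constructor <;> intro h
  · have h1 : Real.exp (-u) * Real.exp u = 1 := by
      rw [← Real.exp_add, neg_add_cancel, Real.exp_zero]
    calc a = a * (Real.exp (-u) * Real.exp u) := by rw [h1, mul_one]
    _ = b * Real.exp (-v) * Real.exp u := by rw [← mul_assoc, h]
    _ = b * Real.exp (u - v) := by
        rw [mul_assoc, ← Real.exp_add, show -v + u = u - v by ring]
  · rw [h, mul_assoc, ← Real.exp_add, show u - v + -u = -v by ring]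

lemma expMeasure_Iic_zero : expMeasure 1 (Set.Iic (0:ℝ)) = 0 := by
  rw [show expMeasure 1 = volume.withDensity (exponentialPDF 1) from rfl,
    withDensity_apply _ measurableSet_Iic,
    lintegral_exponentialPDF_eq_antiDeriv one_pos 0]
  norm_num

lemma expMeasure_Ioi {a : ℝ} (ha : 0 ≤ a) :
    expMeasure 1 (Set.Ioi a) = ENNReal.ofReal (Real.exp (-a)) := by
  haveI : IsProbabilityMeasure (expMeasure 1) := isProbabilityMeasure_expMeasure one_pos
  have hIic : expMeasure 1 (Set.Iic a) = ENNReal.ofReal (1 - Real.exp (-a)) := by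
    rw [show expMeasure 1 = volume.withDensity (exponentialPDF 1) from rfl,
      withDensity_apply _ measurableSet_Iic,
      lintegral_exponentialPDF_eq_antiDeriv one_pos a, if_pos ha, one_mul]
  have h01 : 0 ≤ 1 - Real.exp (-a) := by
    have : Real.exp (-a) ≤ 1 := Real.exp_le_one_iff.mpr (neg_nonpos.mpr ha)
    linarith
  rw [show Set.Ioi a = (Set.Iic a)ᶜ from Set.compl_Iic.symm,
    measure_compl measurableSet_Iic (measure_ne_top _ _), measure_univ, hIic,
    ← ENNReal.ofReal_one, ← ENNReal.ofReal_sub _ h01]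
  congr 1
  ring

lemma expMeasure_singleton (a : ℝ) : expMeasure 1 {a} = 0 :=
  (withDensity_absolutelyContinuous volume _) (measure_singleton a)

variable {C : ℕ}

lemma nonpos_null (i : Fin C) :
    Measure.pi (fun _ : Fin C => expMeasure 1) {ε : Fin C → ℝ | ε i ≤ 0} = 0 := by
  haveI : IsProbabilityMeasure (expMeasure 1) := isProbabilityMeasure_expMeasure one_pos
  have h : {ε : Fin C → ℝ | ε i ≤ 0} = Function.eval i ⁻¹' (Set.Iic (0:ℝ)) := rfl
  rw [h]
  exact Measure.pi_eval_preimage_null _ expMeasure_Iic_zero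

lemma allpos_compl_null :
    Measure.pi (fun _ : Fin C => expMeasure 1) {ε : Fin C → ℝ | ¬ ∀ i, 0 < ε i} = 0 := by
  have hsub : {ε : Fin C → ℝ | ¬ ∀ i, 0 < ε i} ⊆ ⋃ i, {ε : Fin C → ℝ | ε i ≤ 0} := by
    intro ε hε
    push_neg at hε
    obtain ⟨i, hi⟩ := hε
    exact Set.mem_iUnion.mpr ⟨i, hi⟩
  exact measure_mono_null hsub (measure_iUnion_null fun i => nonpos_null i)

/-- Fubini slice formula for the iid Exp(1) product measure, splitting off coordinate `c`. -/
lemma slice_measure {n : ℕ} (c : Fin (n + 1)) (S : Set (ℝ × (Fin n → ℝ)))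
    (hS : MeasurableSet S) :
    Measure.pi (fun _ : Fin (n + 1) => expMeasure 1)
      ((fun ε : Fin (n + 1) → ℝ => (ε c, fun j : Fin n => ε (c.succAbove j))) ⁻¹' S)
    = ∫⁻ t, Measure.pi (fun _ : Fin n => expMeasure 1) (Prod.mk t ⁻¹' S) ∂(expMeasure 1) := by
  haveI : IsProbabilityMeasure (expMeasure 1) := isProbabilityMeasure_expMeasure one_pos
  have hmp := measurePreserving_piFinSuccAbove (fun _ : Fin (n + 1) => expMeasure 1) c
  have hfun : (fun ε : Fin (n + 1) → ℝ => (ε c, fun j : Fin n => ε (c.succAbove j)))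
      = (MeasurableEquiv.piFinSuccAbove (fun _ : Fin (n + 1) => ℝ) c) := rfl
  rw [hfun, hmp.measure_preimage hS.nullMeasurableSet, Measure.prod_apply hS]

lemma tie_null {n : ℕ} (c j : Fin (n + 1)) (hj : j ≠ c) (k : ℝ) :
    Measure.pi (fun _ : Fin (n + 1) => expMeasure 1)
      {ε : Fin (n + 1) → ℝ | ε j = ε c * k} = 0 := by
  haveI : IsProbabilityMeasure (expMeasure 1) := isProbabilityMeasure_expMeasure one_pos
  obtain ⟨j', hj'⟩ := Fin.exists_succAbove_eq hj
  set S : Set (ℝ × (Fin n → ℝ)) := {p | p.2 j' = p.1 * k} with hSdef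
  have hS : MeasurableSet S :=
    measurableSet_eq_fun (measurable_snd.eval) (measurable_fst.mul_const k)
  have hpre : {ε : Fin (n + 1) → ℝ | ε j = ε c * k}
      = (fun ε : Fin (n + 1) → ℝ => (ε c, fun j : Fin n => ε (c.succAbove j))) ⁻¹' S := by
    rw [← hj']
    rfl
  rw [hpre, slice_measure c S hS]
  have hz : ∀ t : ℝ, Measure.pi (fun _ : Fin n => expMeasure 1) (Prod.mk t ⁻¹' S) = 0 := by
    intro t
    have hset : (Prod.mk t ⁻¹' S) = Function.eval j' ⁻¹' ({t * k} : Set ℝ) := rfl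
    rw [hset]
    exact Measure.pi_eval_preimage_null _ (expMeasure_singleton _)
  calc ∫⁻ t, Measure.pi (fun _ : Fin n => expMeasure 1) (Prod.mk t ⁻¹' S) ∂(expMeasure 1)
      = ∫⁻ _ : ℝ, 0 ∂(expMeasure 1) := lintegral_congr hz
    _ = 0 := lintegral_zero

/-- The core "exponential race" computation. -/
lemma measure_race {n : ℕ} (φ : Fin (n + 1) → ℝ) (c : Fin (n + 1)) :
    Measure.pi (fun _ : Fin (n + 1) => expMeasure 1)
      {ε : Fin (n + 1) → ℝ | 0 < ε c ∧
        ∀ j : Fin n, ε c * Real.exp (φ (c.succAbove j) - φ c) < ε (c.succAbove j)}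
    = ENNReal.ofReal (softmax φ c) := by
  haveI : IsProbabilityMeasure (expMeasure 1) := isProbabilityMeasure_expMeasure one_pos
  set r : Fin n → ℝ := fun j => Real.exp (φ (c.succAbove j) - φ c) with hr
  set R : ℝ := ∑ j, r j with hR
  have hRnn : 0 ≤ R := Finset.sum_nonneg fun j _ => (Real.exp_pos _).le
  have h1R : (0:ℝ) < 1 + R := by linarith
  have hsm : softmax φ c = 1 / (1 + R) := by
    have h1 : (1:ℝ) + R = ∑ i, Real.exp (φ i - φ c) := by
      rw [Fin.sum_univ_succAbove (fun i => Real.exp (φ i - φ c)) c, sub_self, Real.exp_zero, hR]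
    have hsum : ∑ i, Real.exp (φ i - φ c) = (∑ i, Real.exp (φ i)) / Real.exp (φ c) := by
      rw [Finset.sum_div]
      exact Finset.sum_congr rfl fun i _ => by rw [Real.exp_sub]
    have hpos : (0:ℝ) < ∑ i, Real.exp (φ i) := by
      have hne : (Finset.univ : Finset (Fin (n + 1))).Nonempty := ⟨c, Finset.mem_univ c⟩
      exact Finset.sum_pos (fun i _ => Real.exp_pos _) hne
    rw [softmax, h1, hsum, one_div_div]
  set S : Set (ℝ × (Fin n → ℝ)) := {p | 0 < p.1 ∧ ∀ j, p.1 * r j < p.2 j} with hSdef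
  have hS1 : MeasurableSet {p : ℝ × (Fin n → ℝ) | 0 < p.1} :=
    measurableSet_lt measurable_const measurable_fst
  have hS2 : MeasurableSet {p : ℝ × (Fin n → ℝ) | ∀ j, p.1 * r j < p.2 j} := by
    rw [Set.setOf_forall]
    exact MeasurableSet.iInter fun j => measurableSet_lt
      (measurable_fst.mul_const _) measurable_snd.eval
  have hS : MeasurableSet S := hS1.inter hS2
  have hpre : {ε : Fin (n + 1) → ℝ | 0 < ε c ∧
        ∀ j : Fin n, ε c * Real.exp (φ (c.succAbove j) - φ c) < ε (c.succAbove j)}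
      = (fun ε : Fin (n + 1) → ℝ => (ε c, fun j : Fin n => ε (c.succAbove j))) ⁻¹' S := rfl
  have hslice : ∀ t : ℝ, Measure.pi (fun _ : Fin n => expMeasure 1) (Prod.mk t ⁻¹' S)
      = if 0 < t then ENNReal.ofReal (Real.exp (-(t * R))) else 0 := by
    intro t
    by_cases ht : 0 < t
    · rw [if_pos ht]
      have hset : (Prod.mk t ⁻¹' S)
          = Set.pi Set.univ (fun j : Fin n => Set.Ioi (t * r j)) := by
        ext y
        simp [hSdef, Set.mem_pi, ht]
      rw [hset, Measure.pi_pi]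
      have hterm : ∀ j : Fin n,
          expMeasure 1 (Set.Ioi (t * r j)) = ENNReal.ofReal (Real.exp (-(t * r j))) :=
        fun j => expMeasure_Ioi (by positivity)
      rw [Finset.prod_congr rfl fun j _ => hterm j,
        ← ENNReal.ofReal_prod_of_nonneg fun _ _ => (Real.exp_pos _).le, ← Real.exp_sum]
      congr 2
      rw [hR, Finset.mul_sum]
      exact Finset.sum_neg_distrib _
    · rw [if_neg ht]
      have hset : (Prod.mk t ⁻¹' S) = ∅ := by
        ext y
        simp [hSdef, ht]
      rw [hset, measure_empty]
  rw [hpre, slice_measure c S hS]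
  calc ∫⁻ t, Measure.pi (fun _ : Fin n => expMeasure 1) (Prod.mk t ⁻¹' S) ∂(expMeasure 1)
      = ∫⁻ t, (if 0 < t then ENNReal.ofReal (Real.exp (-(t * R))) else 0) ∂(expMeasure 1) := by
        exact lintegral_congr hslice
    _ = ∫⁻ t, exponentialPDF 1 t
          * (if 0 < t then ENNReal.ofReal (Real.exp (-(t * R))) else 0) ∂volume := by
        have hg : Measurable fun t : ℝ =>
            if 0 < t then ENNReal.ofReal (Real.exp (-(t * R))) else 0 := by
          refine Measurable.ite ?_ ?_ measurable_const
          · exact (measurableSet_Ioi : MeasurableSet (Set.Ioi (0:ℝ)))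
          · exact ((measurable_id.mul_const R).neg.exp).ennreal_ofReal
        have hf1 : Measurable (exponentialPDF 1) :=
          (measurable_exponentialPDFReal 1).ennreal_ofReal
        rw [show expMeasure 1 = volume.withDensity (exponentialPDF 1) from rfl,
          lintegral_withDensity_eq_lintegral_mul _ hf1 hg]
        rfl
    _ = ∫⁻ t, ENNReal.ofReal (softmax φ c) * exponentialPDF (1 + R) t ∂volume := by
        apply lintegral_congr_ae
        have h0 : (volume : Measure ℝ) {(0:ℝ)} = 0 := measure_singleton 0
        filter_upwards [compl_mem_ae_iff.mpr h0] with t ht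
        have ht' : t ≠ 0 := ht
        rcases lt_or_gt_of_ne ht' with htneg | htpos
        · rw [if_neg (not_lt.mpr htneg.le), mul_zero, exponentialPDF_of_neg htneg, mul_zero]
        · rw [if_pos htpos, exponentialPDF_of_nonneg htpos.le,
            exponentialPDF_of_nonneg htpos.le, hsm,
            ← ENNReal.ofReal_mul (by positivity), ← ENNReal.ofReal_mul (by positivity)]
          congr 1
          rw [one_mul, ← Real.exp_add, show -(1 * t) + -(t * R) = -((1 + R) * t) by ring]
          field_simp
    _ = ENNReal.ofReal (softmax φ c) := by
        have hf2 : Measurable (exponentialPDF (1 + R)) :=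
          (measurable_exponentialPDFReal (1 + R)).ennreal_ofReal
        rw [lintegral_const_mul _ hf2, lintegral_exponentialPDF_eq_one h1R, mul_one]

end Aux

theorem stmt3 {C : ℕ} [NeZero C] (φ : Fin C → ℝ) (c : Fin C) :
    (dirichletOne C) {π | argminF (fun i => π i * Real.exp (-φ i)) = c}
      = ENNReal.ofReal (softmax φ c) := by
  classical
  obtain ⟨n, rfl⟩ : ∃ n, C = n + 1 := ⟨C - 1,
    (Nat.succ_pred_eq_of_pos (Nat.pos_of_ne_zero (NeZero.ne C))).symm⟩
  set μ : Measure (Fin (n + 1) → ℝ) := Measure.pi fun _ => expMeasure 1 with hμ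
  set F : (Fin (n + 1) → ℝ) → (Fin (n + 1) → ℝ) := fun ε i => ε i / ∑ j, ε j with hFdef
  have hFm : Measurable F := by
    refine measurable_pi_lambda _ fun i => Measurable.div (measurable_pi_apply i) ?_
    exact Finset.measurable_sum Finset.univ fun j _ => measurable_pi_apply j
  have hmap : dirichletOne (n + 1) = Measure.map F μ := rfl
  set A : Set (Fin (n + 1) → ℝ) := {π | argminF (fun i => π i * Real.exp (-φ i)) = c} with hA
  set M : Set (Fin (n + 1) → ℝ) :=
    {π | ∀ i, i ≠ c → π c * Real.exp (-φ c) < π i * Real.exp (-φ i)} with hM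
  set T : Set (Fin (n + 1) → ℝ) :=
    {π | ∃ i, i ≠ c ∧ π i * Real.exp (-φ i) = π c * Real.exp (-φ c)} with hT
  have hMm : MeasurableSet M := by
    have : M = ⋂ i, {π : Fin (n + 1) → ℝ | i ≠ c → π c * Real.exp (-φ c) < π i * Real.exp (-φ i)} := by
      ext π; simp [hM, Set.mem_iInter]
    rw [this]
    refine MeasurableSet.iInter fun i => ?_
    by_cases hi : i = c
    · simp [hi]
    · simp only [ne_eq, hi, not_false_iff, true_implies]
      exact measurableSet_lt ((measurable_pi_apply c).mul_const _)
        ((measurable_pi_apply i).mul_const _)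
  have hTm : MeasurableSet T := by
    have : T = ⋃ i, {π : Fin (n + 1) → ℝ | i ≠ c ∧ π i * Real.exp (-φ i) = π c * Real.exp (-φ c)} := by
      ext π; simp [hT]
    rw [this]
    refine MeasurableSet.iUnion fun i => ?_
    by_cases hi : i = c
    · simp [hi]
    · simp only [ne_eq, hi, not_false_iff, true_and]
      exact measurableSet_eq_fun ((measurable_pi_apply i).mul_const _)
        ((measurable_pi_apply c).mul_const _)
  -- T is null under dirichletOne
  have hTnull : dirichletOne (n + 1) T = 0 := by
    rw [hmap, Measure.map_apply hFm hTm]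
    have hsub : F ⁻¹' T ⊆ {ε : Fin (n + 1) → ℝ | ¬ ∀ i, 0 < ε i}
        ∪ ⋃ i, {ε : Fin (n + 1) → ℝ | i ≠ c ∧ ε i = ε c * Real.exp (φ i - φ c)} := by
      intro ε hε
      have hε' : ∃ i, i ≠ c ∧ F ε i * Real.exp (-φ i) = F ε c * Real.exp (-φ c) := hε
      obtain ⟨i, hi, heq⟩ := hε'
      by_cases hpos : ∀ j, 0 < ε j
      · right
        refine Set.mem_iUnion.mpr ⟨i, hi, ?_⟩
        have hSpos : 0 < ∑ j, ε j :=
          Finset.sum_pos (fun j _ => hpos j) ⟨c, Finset.mem_univ c⟩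
        have heq2 : ε i * Real.exp (-φ i) = ε c * Real.exp (-φ c) := by
          have h3 : ε i / (∑ j, ε j) * Real.exp (-φ i)
              = ε c / (∑ j, ε j) * Real.exp (-φ c) := heq
          rw [div_mul_eq_mul_div, div_mul_eq_mul_div, div_eq_div_iff hSpos.ne' hSpos.ne'] at h3
          exact mul_right_cancel₀ hSpos.ne' h3
        exact (eq_iff' _ _ _ _).mp heq2
      · exact Or.inl hpos
    refine measure_mono_null hsub (measure_union_null allpos_compl_null ?_)
    refine measure_iUnion_null fun i => ?_
    by_cases hi : i = c
    · simp [hi]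
    · refine measure_mono_null (fun ε hε => hε.2) (tie_null c i hi _)
  -- A and M agree off T
  have hAM : A =ᵐ[dirichletOne (n + 1)] M := by
    have hsub2 : {π : Fin (n + 1) → ℝ | ¬ (π ∈ A ↔ π ∈ M)} ⊆ T := by
      intro π hπ
      by_contra hπT
      apply hπ
      have hne : ∀ i, i ≠ c →
          π i * Real.exp (-φ i) ≠ π c * Real.exp (-φ c) := by
        intro i hi heq
        exact hπT ⟨i, hi, heq⟩
      exact argminF_eq_iff _ c hne
    exact Filter.eventuallyEq_set.mpr (ae_iff.mpr (measure_mono_null hsub2 hTnull))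
  rw [measure_congr hAM, hmap, Measure.map_apply hFm hMm]
  -- reduce to the race event
  set B : Set (Fin (n + 1) → ℝ) := {ε | 0 < ε c ∧
    ∀ j : Fin n, ε c * Real.exp (φ (c.succAbove j) - φ c) < ε (c.succAbove j)} with hB
  have hFB : ∀ ε : Fin (n + 1) → ℝ, (∀ i, 0 < ε i) → (ε ∈ F ⁻¹' M ↔ ε ∈ B) := by
    intro ε hpos
    have hSpos : 0 < ∑ j, ε j := Finset.sum_pos (fun j _ => hpos j) ⟨c, Finset.mem_univ c⟩
    have hstep : ∀ i : Fin (n + 1),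
        (F ε c * Real.exp (-φ c) < F ε i * Real.exp (-φ i)
          ↔ ε c * Real.exp (φ i - φ c) < ε i) := by
      intro i
      rw [show F ε c = ε c / ∑ j, ε j from rfl, show F ε i = ε i / ∑ j, ε j from rfl,
        div_mul_eq_mul_div, div_mul_eq_mul_div, div_lt_div_iff_of_pos_right hSpos,
        ineq_iff]
    constructor
    · intro hεM
      have hεM' : ∀ i, i ≠ c → F ε c * Real.exp (-φ c) < F ε i * Real.exp (-φ i) := hεM
      exact ⟨hpos c, fun j => (hstep (c.succAbove j)).mp (hεM' _ (Fin.succAbove_ne c j))⟩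
    · intro hεB
      have hεB' : 0 < ε c ∧
          ∀ j : Fin n, ε c * Real.exp (φ (c.succAbove j) - φ c) < ε (c.succAbove j) := hεB
      intro i hi
      obtain ⟨j, hj⟩ := Fin.exists_succAbove_eq hi
      have h2 := hεB'.2 j
      rw [hj] at h2
      exact (hstep i).mpr h2
  have hFMB : F ⁻¹' M =ᵐ[μ] B := by
    have hsub : {ε : Fin (n + 1) → ℝ | ¬ (ε ∈ F ⁻¹' M ↔ ε ∈ B)} ⊆ {ε | ¬ ∀ i, 0 < ε i} := by
      intro ε hε
      by_contra hpos
      exact hε (hFB ε (not_not.mp hpos))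
    exact Filter.eventuallyEq_set.mpr (ae_iff.mpr (measure_mono_null hsub allpos_compl_null))
  rw [measure_congr hFMB, hμ, hB]
  exact measure_race φ c
end

section
/- The ARS baseline has zero expectation: for any fixed reference j ∈ {1,…,C}, E_{π~Dir(1_C)}[(1/C) Σ_{c=1}^C f(z^{c⇌j})·(1 - C·π_j)] = 0, where z^{c⇌j} := argmin_i π_i^{c⇌j} e^{-φ_i}. -/
open MeasureTheory ProbabilityTheory

/-! ### Auxiliary lemmas -/

namespace Stmt12Aux

instance : IsProbabilityMeasure (expMeasure 1) := isProbabilityMeasure_expMeasure one_pos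

instance : NullSingletonClass (expMeasure 1) := by
  constructor
  intro x
  rw [expMeasure, gammaMeasure, withDensity_apply _ (measurableSet_singleton x),
    lintegral_singleton]
  simp

lemma ae_exp_pos : ∀ᵐ x ∂(expMeasure 1), 0 < x := by
  rw [ae_iff]
  have h : {x : ℝ | ¬ 0 < x} = Set.Iio 0 ∪ {0} := by
    ext x; simp [not_lt, le_iff_lt_or_eq]
  rw [h]
  refine measure_union_null ?_ (measure_singleton 0)
  rw [expMeasure, gammaMeasure, withDensity_apply _ measurableSet_Iio]
  exact lintegral_gammaPDF_of_nonpos le_rfl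

lemma ae_ne_pi {n : ℕ} (k k' : Fin (n+1)) (h : k ≠ k') (a b : ℝ) (hb : b ≠ 0) :
    ∀ᵐ ε ∂(Measure.pi fun _ : Fin (n+1) => expMeasure 1), ε k * a ≠ ε k' * b := by
  obtain ⟨m, hm⟩ := Fin.exists_succAbove_eq h.symm
  set e := MeasurableEquiv.piFinSuccAbove (fun _ : Fin (n+1) => ℝ) k with he
  have hmp := measurePreserving_piFinSuccAbove (fun _ : Fin (n+1) => expMeasure 1) k
  rw [ae_iff]
  set S' : Set (ℝ × (Fin n → ℝ)) := {p | p.1 * a = p.2 m * b} with hS'def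
  have hS' : MeasurableSet S' :=
    measurableSet_eq_fun (measurable_fst.mul_const a)
      (by exact ((measurable_pi_apply m : Measurable fun f : Fin n → ℝ => f m).comp measurable_snd |>.mul_const b))
  have hset : {ε : Fin (n+1) → ℝ | ¬ ε k * a ≠ ε k' * b} = e ⁻¹' S' := by
    ext ε
    simp only [Set.mem_setOf_eq, not_not, Set.mem_preimage, hS'def, he,
      MeasurableEquiv.piFinSuccAbove]
    simp [Fin.insertNthEquiv, ← hm, Fin.removeNth]
  rw [hset, ← Measure.map_apply e.measurable hS', hmp.map_eq, Measure.prod_apply hS']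
  have hinner : ∀ x : ℝ,
      (Measure.pi fun _ : Fin n => expMeasure 1) (Prod.mk x ⁻¹' S') = 0 := by
    intro x
    have h0 : ∀ᵐ y ∂(Measure.pi fun _ : Fin n => expMeasure 1), y m ≠ x * a / b :=
      Measure.ae_eval_ne (μ := fun _ : Fin n => expMeasure 1) m (x * a / b)
    rw [ae_iff] at h0
    convert h0 using 2
    ext y
    simp only [Set.mem_preimage, hS'def, Set.mem_setOf_eq, not_not]
    rw [eq_comm]
    exact (eq_div_iff hb).symm
  simp [hinner]

section
variable {C : ℕ} [NeZero C]

/-- Precomposition with a permutation, as a measurable equiv. -/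
def permComp (σ : Equiv.Perm (Fin C)) : (Fin C → ℝ) ≃ᵐ (Fin C → ℝ) where
  toEquiv :=
  { toFun := fun π => π ∘ σ
    invFun := fun π => π ∘ σ.symm
    left_inv := fun π => by funext i; simp
    right_inv := fun π => by funext i; simp }
  measurable_toFun := measurable_pi_lambda _ fun i => measurable_pi_apply _
  measurable_invFun := measurable_pi_lambda _ fun i => measurable_pi_apply _

omit [NeZero C] in
lemma mp_pi (σ : Equiv.Perm (Fin C)) :
    MeasurePreserving (fun ε : Fin C → ℝ => ε ∘ σ)
      (Measure.pi fun _ => expMeasure 1) (Measure.pi fun _ => expMeasure 1) := by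
  have h := measurePreserving_piCongrLeft (fun _ : Fin C => expMeasure 1) σ.symm
  have hco : ⇑(MeasurableEquiv.piCongrLeft (fun _ : Fin C => ℝ) σ.symm)
      = fun ε : Fin C → ℝ => ε ∘ σ := by
    funext x
    funext i
    have := MeasurableEquiv.piCongrLeft_apply_apply σ.symm (β := fun _ : Fin C => ℝ) x (σ i)
    simpa using this
  rw [hco] at h
  exact h

/-- The normalization map. -/
noncomputable def N : (Fin C → ℝ) → (Fin C → ℝ) := fun ε i => ε i / ∑ j, ε j

omit [NeZero C] in
lemma measurable_N : Measurable (N (C := C)) :=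
  measurable_pi_lambda _ fun i =>
    (measurable_pi_apply i).div (Finset.univ.measurable_sum fun j _ => measurable_pi_apply j)

omit [NeZero C] in
lemma dirichletOne_eq : dirichletOne C = Measure.map N (Measure.pi fun _ => expMeasure 1) := rfl

instance : IsProbabilityMeasure (dirichletOne C) := by
  rw [dirichletOne_eq]
  exact Measure.isProbabilityMeasure_map measurable_N.aemeasurable

omit [NeZero C] in
lemma mp_D (σ : Equiv.Perm (Fin C)) :
    MeasurePreserving (fun π : Fin C → ℝ => π ∘ σ) (dirichletOne C) (dirichletOne C) := by
  refine ⟨measurable_pi_lambda _ fun i => measurable_pi_apply _, ?_⟩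
  rw [dirichletOne_eq]
  have hmm1 := Measure.map_map (μ := Measure.pi fun _ : Fin C => expMeasure 1) (f := N)
    (g := fun π : Fin C → ℝ => π ∘ σ)
    (measurable_pi_lambda _ fun i => measurable_pi_apply _) measurable_N
  rw [hmm1]
  have hkey : (fun π : Fin C → ℝ => π ∘ σ) ∘ N = N ∘ (fun ε : Fin C → ℝ => ε ∘ σ) := by
    funext ε
    funext i
    simp only [Function.comp_apply, N]
    congr 1
    exact (Equiv.sum_comp σ fun j => ε j).symm
  have hmm2 := Measure.map_map (μ := Measure.pi fun _ : Fin C => expMeasure 1)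
    (f := fun ε : Fin C → ℝ => ε ∘ σ) (g := N)
    measurable_N (measurable_pi_lambda _ fun i => measurable_pi_apply _)
  rw [hkey, ← hmm2, (mp_pi σ).map_eq]

variable (φ : Fin C → ℝ)

/-- The "good" event: nonnegative coordinates summing to 1, with all relevant products
distinct. -/
def Good (π : Fin C → ℝ) : Prop :=
  (∀ i, 0 ≤ π i) ∧ (∑ i, π i = 1) ∧
    ∀ k k' c c' : Fin C, k ≠ k' → π k * Real.exp (-φ c) ≠ π k' * Real.exp (-φ c')

lemma measurableSet_good : MeasurableSet {π : Fin C → ℝ | Good φ π} := by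
  have h1 : MeasurableSet {π : Fin C → ℝ | ∀ i, 0 ≤ π i} := by
    rw [Set.setOf_forall]
    exact MeasurableSet.iInter fun i =>
      measurableSet_le measurable_const (measurable_pi_apply i)
  have h2 : MeasurableSet {π : Fin C → ℝ | ∑ i, π i = 1} :=
    measurableSet_eq_fun (Finset.univ.measurable_sum fun j _ => measurable_pi_apply j)
      measurable_const
  have h3 : MeasurableSet {π : Fin C → ℝ |
      ∀ k k' c c' : Fin C, k ≠ k' → π k * Real.exp (-φ c) ≠ π k' * Real.exp (-φ c')} := by
    rw [Set.setOf_forall]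
    refine MeasurableSet.iInter fun k => ?_
    rw [Set.setOf_forall]
    refine MeasurableSet.iInter fun k' => ?_
    rw [Set.setOf_forall]
    refine MeasurableSet.iInter fun c => ?_
    rw [Set.setOf_forall]
    refine MeasurableSet.iInter fun c' => ?_
    by_cases hkk : k = k'
    · simp [hkk]
    · have : {π : Fin C → ℝ | k ≠ k' → π k * Real.exp (-φ c) ≠ π k' * Real.exp (-φ c')}
          = {π : Fin C → ℝ | π k * Real.exp (-φ c) = π k' * Real.exp (-φ c')}ᶜ := by
        ext π; simp [hkk]
      rw [this]
      exact (measurableSet_eq_fun ((measurable_pi_apply k).mul_const _)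
        ((measurable_pi_apply k').mul_const _)).compl
  have : {π : Fin C → ℝ | Good φ π} = _ ∩ (_ ∩ _) := rfl
  exact (h1.inter (h2.inter h3))

lemma ae_good : ∀ᵐ π ∂(dirichletOne C), Good φ π := by
  obtain ⟨n, rfl⟩ : ∃ n, C = n + 1 := ⟨C - 1, (Nat.succ_pred_eq_of_pos (NeZero.pos C)).symm⟩
  rw [dirichletOne_eq, ae_map_iff measurable_N.aemeasurable (measurableSet_good φ)]
  have hpos : ∀ᵐ ε ∂(Measure.pi fun _ : Fin (n+1) => expMeasure 1), ∀ i, 0 < ε i :=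
    ae_all_iff.2 fun i => Measure.tendsto_eval_ae_ae.eventually ae_exp_pos
  have hne : ∀ᵐ ε ∂(Measure.pi fun _ : Fin (n+1) => expMeasure 1),
      ∀ k k' c c' : Fin (n+1), k ≠ k' →
        ε k * Real.exp (-φ c) ≠ ε k' * Real.exp (-φ c') := by
    rw [ae_all_iff]; intro k
    rw [ae_all_iff]; intro k'
    rw [ae_all_iff]; intro c
    rw [ae_all_iff]; intro c'
    by_cases hkk : k = k'
    · filter_upwards with ε hcon; exact absurd hkk hcon
    · filter_upwards [ae_ne_pi k k' hkk _ _ (Real.exp_ne_zero _)] with ε hε _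
      exact hε
  filter_upwards [hpos, hne] with ε hp hn
  have hS : 0 < ∑ j, ε j := Finset.sum_pos (fun i _ => hp i) Finset.univ_nonempty
  refine ⟨fun i => div_nonneg (hp i).le hS.le, ?_, ?_⟩
  · simp only [N]
    rw [← Finset.sum_div, div_self hS.ne']
  · intro k k' c c' hkk hcon
    refine hn k k' c c' hkk ?_
    have : (ε k * Real.exp (-φ c)) / (∑ j, ε j) = (ε k' * Real.exp (-φ c')) / (∑ j, ε j) := by
      simpa [N, div_mul_eq_mul_div] using hcon
    exact mul_right_cancel₀ (inv_ne_zero hS.ne') (by simpa [div_eq_mul_inv] using this)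


lemma argminF_le (v : Fin C → ℝ) (k : Fin C) : v (argminF v) ≤ v k := by
  have h := (Finset.exists_min_image Finset.univ v Finset.univ_nonempty).choose_spec
  exact h.2 k (Finset.mem_univ k)

variable (f : Fin C → ℝ)

/-- Measurable version of `f ∘ argminF` (agreeing on points with unique argmin). -/
noncomputable def Gfun (σ : Equiv.Perm (Fin C)) : (Fin C → ℝ) → ℝ := fun π =>
  ∑ i, Set.indicator
    {π' : Fin C → ℝ | ∀ k, k ≠ i →
      π' (σ i) * Real.exp (-φ i) < π' (σ k) * Real.exp (-φ k)} (fun _ => f i) π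

lemma measurable_Gfun (σ : Equiv.Perm (Fin C)) : Measurable (Gfun φ f σ) := by
  refine Finset.univ.measurable_sum fun i _ => ?_
  refine Measurable.indicator measurable_const ?_
  rw [Set.setOf_forall]
  refine MeasurableSet.iInter fun k => ?_
  by_cases hk : k = i
  · simp [hk]
  · have : {π' : Fin C → ℝ | k ≠ i →
        π' (σ i) * Real.exp (-φ i) < π' (σ k) * Real.exp (-φ k)}
        = {π' : Fin C → ℝ | π' (σ i) * Real.exp (-φ i) < π' (σ k) * Real.exp (-φ k)} := by
      ext π'; simp [hk]
    rw [this]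
    exact measurableSet_lt ((measurable_pi_apply _).mul_const _)
      ((measurable_pi_apply _).mul_const _)

lemma good_argmin (σ : Equiv.Perm (Fin C)) (π : Fin C → ℝ) (h : Good φ π) :
    f (argminF fun i => π (σ i) * Real.exp (-φ i)) = Gfun φ f σ π := by
  set v : Fin C → ℝ := fun i => π (σ i) * Real.exp (-φ i) with hv
  set a := argminF v with ha
  have hmin : ∀ k, v a ≤ v k := argminF_le v
  have hstrict : ∀ k, k ≠ a → v a < v k := by
    intro k hk
    refine lt_of_le_of_ne (hmin k) ?_
    exact h.2.2 (σ a) (σ k) a k (fun hc => hk (σ.injective hc).symm)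
  rw [Gfun, Finset.sum_eq_single a]
  · rw [Set.indicator_of_mem]
    exact fun k hk => hstrict k hk
  · intro i _ hi
    rw [Set.indicator_of_notMem]
    intro hmem
    exact absurd (hmin i) (not_le.2 (hmem a (fun hc => hi hc.symm)))
  · intro hcon
    exact absurd (Finset.mem_univ a) hcon

lemma abs_Gfun_le (σ : Equiv.Perm (Fin C)) (π : Fin C → ℝ) :
    |Gfun φ f σ π| ≤ ∑ i, |f i| := by
  refine (Finset.abs_sum_le_sum_abs _ _).trans ?_
  refine Finset.sum_le_sum fun i _ => ?_
  rw [Set.indicator]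
  split
  · exact le_rfl
  · simp [abs_nonneg]

lemma integrable_aux (σ : Equiv.Perm (Fin C)) (m : Fin C) :
    Integrable (fun π => f (argminF fun i => π (σ i) * Real.exp (-φ i)) * (1 - C * π m))
      (dirichletOne C) := by
  have hae : (fun π => f (argminF fun i => π (σ i) * Real.exp (-φ i)) * (1 - C * π m))
      =ᵐ[dirichletOne C] (fun π => Gfun φ f σ π * (1 - C * π m)) :=
    (ae_good φ).mono fun π h => by dsimp only; rw [good_argmin φ f σ π h]
  refine Integrable.congr ?_ hae.symm
  have hmeas : Measurable (fun π : Fin C → ℝ => Gfun φ f σ π * (1 - C * π m)) :=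
    (measurable_Gfun φ f σ).mul
      (measurable_const.sub (measurable_const.mul (measurable_pi_apply m)))
  refine Integrable.mono' (integrable_const ((∑ i, |f i|) * (1 + C)))
    hmeas.aestronglyMeasurable ?_
  filter_upwards [ae_good φ] with π hg
  rw [norm_mul]
  have hπ1 : π m ≤ 1 := by
    rw [← hg.2.1]
    exact Finset.single_le_sum (fun i _ => hg.1 i) (Finset.mem_univ m)
  have h2 : ‖1 - (C : ℝ) * π m‖ ≤ 1 + C := by
    rw [Real.norm_eq_abs, abs_sub_le_iff]
    constructor
    · have : (0:ℝ) ≤ C * π m := mul_nonneg (Nat.cast_nonneg C) (hg.1 m)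
      linarith
    · have : (C:ℝ) * π m ≤ C * 1 := by
        refine mul_le_mul_of_nonneg_left hπ1 (Nat.cast_nonneg C)
      linarith
  refine mul_le_mul ?_ h2 (norm_nonneg _) ?_
  · rw [Real.norm_eq_abs]; exact abs_Gfun_le φ f σ π
  · exact Finset.sum_nonneg fun i _ => abs_nonneg _

end

end Stmt12Aux

open Stmt12Aux in
theorem stmt12 {C : ℕ} [NeZero C] (φ f : Fin C → ℝ) (j : Fin C) :
    ∫ π, ((1 / C) * ∑ c, f (zswap φ π c j)) * (1 - C * π j) ∂(dirichletOne C) = 0 := by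
  classical
  have hint_t : ∀ c : Fin C,
      Integrable (fun π => f (zswap φ π c j) * (1 - C * π j)) (dirichletOne C) := by
    intro c
    simpa [zswap] using integrable_aux φ f (Equiv.swap c j) j
  have hint_h : ∀ c : Fin C,
      Integrable (fun π => f (argminF fun i => π i * Real.exp (-φ i)) * (1 - C * π c))
        (dirichletOne C) := by
    intro c
    simpa using integrable_aux φ f (Equiv.refl (Fin C)) c
  have hswap : ∀ c : Fin C,
      ∫ π, f (zswap φ π c j) * (1 - C * π j) ∂(dirichletOne C)
        = ∫ π, f (argminF fun i => π i * Real.exp (-φ i)) * (1 - C * π c)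
            ∂(dirichletOne C) := by
    intro c
    have hemb : MeasurableEmbedding (fun π : Fin C → ℝ => π ∘ (Equiv.swap c j)) :=
      (permComp (Equiv.swap c j)).measurableEmbedding
    have h := (mp_D (Equiv.swap c j)).integral_comp hemb
      (fun π => f (argminF fun i => π i * Real.exp (-φ i)) * (1 - C * π c))
    rw [← h]
    congr 1
    funext π
    simp only [Function.comp_apply, Equiv.swap_apply_left, zswap]
  calc ∫ π, ((1 / C) * ∑ c, f (zswap φ π c j)) * (1 - C * π j) ∂(dirichletOne C)
      = ∫ π, ∑ c, (1 / C : ℝ) * (f (zswap φ π c j) * (1 - C * π j)) ∂(dirichletOne C) := by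
        congr 1
        funext π
        rw [mul_assoc, Finset.sum_mul, Finset.mul_sum]
    _ = ∑ c, ∫ π, (1 / C : ℝ) * (f (zswap φ π c j) * (1 - C * π j)) ∂(dirichletOne C) :=
        integral_finset_sum _ (fun c _ => (hint_t c).const_mul _)
    _ = ∑ c, (1 / C : ℝ) * ∫ π, f (zswap φ π c j) * (1 - C * π j) ∂(dirichletOne C) := by
        simp only [MeasureTheory.integral_const_mul]
    _ = (1 / C : ℝ) * ∑ c, ∫ π, f (argminF fun i => π i * Real.exp (-φ i)) * (1 - C * π c)
          ∂(dirichletOne C) := by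
        rw [← Finset.mul_sum]
        congr 1
        exact Finset.sum_congr rfl fun c _ => hswap c
    _ = (1 / C : ℝ) * ∫ π, ∑ c, f (argminF fun i => π i * Real.exp (-φ i)) * (1 - C * π c)
          ∂(dirichletOne C) := by
        rw [integral_finset_sum _ (fun c _ => hint_h c)]
    _ = 0 := by
        have hz : ∀ᵐ π ∂(dirichletOne C),
            (∑ c, f (argminF fun i => π i * Real.exp (-φ i)) * (1 - C * π c)) = 0 := by
          filter_upwards [ae_good φ] with π hg
          rw [← Finset.mul_sum]
          have : (∑ c, (1 - (C:ℝ) * π c)) = 0 := by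
            rw [Finset.sum_sub_distrib, ← Finset.mul_sum, hg.2.1]
            simp
          rw [this, mul_zero]
        rw [integral_congr_ae hz]
        simp
end
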